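/- Let a_1,…,a_n > 0, m_1,…,m_n > 0, c > 0, and define for a prefix set A_r = {1,…,r} (r < n): μ(A_r) = (c − ∑_{j=1}^r m_j)/(∑_{j=r+1}^n a_j). Suppose the indices are ordered so that m_1/a_1 ≤ m_2/a_2 ≤ … ≤ m_n/a_n and c − ∑_{j=1}^r m_j > 0. Then for indices r < q < i ≤ n: if m_i/a_i < μ(A_r), then m_i/a_i < μ(A_q). -/

import Mathlib

open Finset

/-- Water-level monotonicity: if worker i is below the water level μ(A_r),
    it stays below the water level μ(A_q) for any larger prefix A_q with q < i. -/
theorem stmt_7 (n r q i : ℕ) (a m : ℕ → ℝ) (c : ℝ)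
    (ha : ∀ j, j < n → 0 < a j) (hm : ∀ j, j < n → 0 < m j) (hc : 0 < c)
    (hmono : ∀ j₁ j₂, j₁ ≤ j₂ → j₂ < n → m j₁ / a j₁ ≤ m j₂ / a j₂)
    (hrq : r < q) (hqi : q < i) (hin : i < n)
    (hcr : 0 < c - ∑ j ∈ Finset.range r, m j)
    (hlt : m i / a i <
      (c - ∑ j ∈ Finset.range r, m j) / ∑ j ∈ Finset.Ico r n, a j) :
    m i / a i <
      (c - ∑ j ∈ Finset.range q, m j) / ∑ j ∈ Finset.Ico q n, a j := by
  have hrn : r < n := lt_trans (lt_trans hrq hqi) hin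
  have hqn : q < n := lt_trans hqi hin
  set Sr := c - ∑ j ∈ Finset.range r, m j with hSr
  set Sq := c - ∑ j ∈ Finset.range q, m j with hSq
  set Dr := ∑ j ∈ Finset.Ico r n, a j with hDr
  set Dq := ∑ j ∈ Finset.Ico q n, a j with hDq
  have hDqpos : 0 < Dq :=
    Finset.sum_pos (fun j hj => ha j (Finset.mem_Ico.mp hj).2)
      ⟨q, Finset.mem_Ico.mpr ⟨le_refl q, hqn⟩⟩
  have hDrpos : 0 < Dr :=
    Finset.sum_pos (fun j hj => ha j (Finset.mem_Ico.mp hj).2)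
      ⟨r, Finset.mem_Ico.mpr ⟨le_refl r, hrn⟩⟩
  set lam := Sr / Dr with hlam
  have hlampos : 0 < lam := div_pos hcr hDrpos
  -- per-term bound on Ico r q
  have hterm : ∀ j ∈ Finset.Ico r q, m j ≤ lam * a j := by
    intro j hj
    obtain ⟨_, hjq⟩ := Finset.mem_Ico.mp hj
    have hjn : j < n := lt_trans (lt_trans hjq hqi) hin
    have h1 : m j / a j ≤ m i / a i :=
      hmono j i (le_of_lt (lt_trans hjq hqi)) hin
    have h2 : m j / a j < lam := lt_of_le_of_lt h1 hlt
    have := (div_lt_iff₀ (ha j hjn)).mp h2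
    linarith
  have hsum : ∑ j ∈ Finset.Ico r q, m j ≤ lam * ∑ j ∈ Finset.Ico r q, a j := by
    rw [Finset.mul_sum]
    exact Finset.sum_le_sum hterm
  -- splitting identities
  have hmsplit : (∑ j ∈ Finset.range r, m j) + ∑ j ∈ Finset.Ico r q, m j
      = ∑ j ∈ Finset.range q, m j := by
    rw [Finset.range_eq_Ico, Finset.range_eq_Ico]
    exact Finset.sum_Ico_consecutive _ (Nat.zero_le r) (le_of_lt hrq)
  have hasplit : (∑ j ∈ Finset.Ico r q, a j) + Dq = Dr := by
    exact Finset.sum_Ico_consecutive _ (le_of_lt hrq) (le_of_lt hqn)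
  have hSqeq : Sq = Sr - ∑ j ∈ Finset.Ico r q, m j := by
    rw [hSq, hSr, ← hmsplit]; ring
  have hlamDr : lam * Dr = Sr := by
    rw [hlam]; field_simp
  have hkey : lam * Dq ≤ Sq := by
    have : lam * Dq = lam * Dr - lam * ∑ j ∈ Finset.Ico r q, a j := by
      rw [← hasplit]; ring
    rw [this, hlamDr, hSqeq]
    linarith
  have hfin : lam ≤ Sq / Dq := (le_div_iff₀ hDqpos).mpr hkey
  exact lt_of_lt_of_le hlt hfin
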